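/- The automorphism group of the symplectic graph Sp(2ν,2) is isomorphic to the symplectic group Sp_{2ν}(F_2) of 2ν×2ν matrices T over F_2 with T K Tᵀ = K; explicitly, the map sending T ∈ Sp_{2ν}(F_2) to the automorphism [α] ↦ [αT] is a group isomorphism from Sp_{2ν}(F_2) onto Aut(Sp(2ν,2)). -/

import Mathlib

open Matrix

/-- The standard nonsingular alternate matrix over `F` with `ν` diagonal blocks
`[[0,1],[-1,0]]`. -/
def sK (F : Type) [Field F] (ν : ℕ) : Matrix (Fin (2 * ν)) (Fin (2 * ν)) F :=
  Matrix.of fun i j =>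
    if i.val % 2 = 0 ∧ j.val = i.val + 1 then (1 : F)
    else if j.val % 2 = 0 ∧ i.val = j.val + 1 then (-1 : F) else 0

/-- The symplectic graph `Sp(2ν, q)`: vertices are the one-dimensional subspaces
of `F^(2ν)`, with `[α]` adjacent to `[β]` iff `α K βᵀ ≠ 0`. -/
def SpG (F : Type) [Field F] (ν : ℕ) :
    SimpleGraph (Projectivization F (Fin (2 * ν) → F)) :=
  SimpleGraph.fromRel fun x y => x.rep ⬝ᵥ ((sK F ν) *ᵥ y.rep) ≠ 0

/-- The automorphism group of a simple graph, as a subgroup of the permutation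
group of its vertices. -/
def autGroup {V : Type} (G : SimpleGraph V) : Subgroup (Equiv.Perm V) where
  carrier := {σ | ∀ x y, G.Adj (σ x) (σ y) ↔ G.Adj x y}
  one_mem' := by intro x y; rfl
  mul_mem' := by
    intro a b ha hb x y
    simpa [Equiv.Perm.mul_apply] using (ha (b x) (b y)).trans (hb x y)
  inv_mem' := by
    intro a ha x y
    rw [← ha (a⁻¹ x) (a⁻¹ y)]
    simp

private theorem mul_aux {m F : Type} [Fintype m] [Field F] {A B L : Matrix m m F}
    (hA : A * L * Aᵀ = L) (hB : B * L * Bᵀ = L) : (A * B) * L * (A * B)ᵀ = L := by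
  rw [Matrix.transpose_mul]
  calc A * B * L * (Bᵀ * Aᵀ) = A * (B * L * Bᵀ) * Aᵀ := by simp only [Matrix.mul_assoc]
    _ = L := by rw [hB, hA]

private theorem inv_aux {m F : Type} [Fintype m] [DecidableEq m] [Field F]
    {A A' L : Matrix m m F}
    (hA : A * L * Aᵀ = L) (h1 : A' * A = 1) : A' * L * A'ᵀ = L := by
  calc A' * L * A'ᵀ = A' * (A * L * Aᵀ) * A'ᵀ := by rw [hA]
    _ = (A' * A) * L * (A' * A)ᵀ := by
        rw [Matrix.transpose_mul]
        simp only [Matrix.mul_assoc]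
    _ = L := by rw [h1, Matrix.transpose_one, Matrix.one_mul, Matrix.mul_one]

/-- The symplectic group `Sp_{2ν}(F)`: invertible matrices `T` with `T K Tᵀ = K`. -/
def SpMat (F : Type) [Field F] (ν : ℕ) :
    Subgroup (Matrix (Fin (2 * ν)) (Fin (2 * ν)) F)ˣ where
  carrier := {T | (T : Matrix (Fin (2 * ν)) (Fin (2 * ν)) F) * sK F ν
      * (T : Matrix (Fin (2 * ν)) (Fin (2 * ν)) F)ᵀ = sK F ν}
  one_mem' := by simp
  mul_mem' := by
    intro a b ha hb
    simp only [Set.mem_setOf_eq, Units.val_mul] at *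
    exact mul_aux ha hb
  inv_mem' := by
    intro a ha
    simp only [Set.mem_setOf_eq] at *
    refine inv_aux ha ?_
    rw [← Units.val_mul, inv_mul_cancel, Units.val_one]

/-! ### Auxiliary development -/

section Aux

open Projectivization

/-- The partner index: `pr` swaps `2k ↔ 2k+1`. -/
def pr (ν : ℕ) (i : Fin (2*ν)) : Fin (2*ν) :=
  ⟨if i.val % 2 = 0 then i.val + 1 else i.val - 1, by
    rcases i with ⟨i, hi⟩; dsimp; split <;> omega⟩

lemma pr_pr (ν : ℕ) (i : Fin (2*ν)) : pr ν (pr ν i) = i := by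
  rcases i with ⟨i, hi⟩
  simp only [pr, Fin.mk.injEq]
  split <;> split <;> omega

lemma pr_ne (ν : ℕ) (i : Fin (2*ν)) : pr ν i ≠ i := by
  rcases i with ⟨i, hi⟩
  simp only [pr, Ne, Fin.mk.injEq]
  split <;> omega

lemma sK2_apply (ν : ℕ) (i j : Fin (2*ν)) :
    sK (ZMod 2) ν i j = if j = pr ν i then 1 else 0 := by
  have hneg : (-1 : ZMod 2) = 1 := by decide
  rcases i with ⟨i, hi⟩; rcases j with ⟨j, hj⟩
  simp only [sK, Matrix.of_apply, pr, Fin.mk.injEq]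
  split_ifs <;> first | rfl | exact hneg | omega

lemma sK2_mulVec (ν : ℕ) (v : Fin (2*ν) → ZMod 2) (i : Fin (2*ν)) :
    (sK (ZMod 2) ν *ᵥ v) i = v (pr ν i) := by
  simp only [Matrix.mulVec, dotProduct, sK2_apply]
  rw [Finset.sum_eq_single (pr ν i)] <;> simp +contextual

/-- The symplectic bilinear form over `F₂`. -/
def Bf (ν : ℕ) (v w : Fin (2*ν) → ZMod 2) : ZMod 2 := v ⬝ᵥ (sK (ZMod 2) ν *ᵥ w)

lemma Bf_eq_sum (ν : ℕ) (v w : Fin (2*ν) → ZMod 2) :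
    Bf ν v w = ∑ i, v i * w (pr ν i) := by
  simp [Bf, dotProduct, sK2_mulVec]

lemma Bf_symm (ν : ℕ) (v w : Fin (2*ν) → ZMod 2) : Bf ν v w = Bf ν w v := by
  rw [Bf_eq_sum, Bf_eq_sum]
  rw [← Equiv.sum_comp (Function.Involutive.toPerm (pr ν) (pr_pr ν))
    (fun i => w i * v (pr ν i))]
  simp [Function.Involutive.toPerm, pr_pr, mul_comm]

lemma Bf_self (ν : ℕ) (v : Fin (2*ν) → ZMod 2) : Bf ν v v = 0 := by
  rw [Bf_eq_sum]
  refine Finset.sum_ninvolution (pr ν) (fun i => ?_) (fun i _ => pr_ne ν i)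
    (fun _ => Finset.mem_univ _) (pr_pr ν)
  rw [pr_pr, mul_comm]
  exact CharTwo.add_self_eq_zero _

lemma Bf_zero_left (ν : ℕ) (w : Fin (2*ν) → ZMod 2) : Bf ν 0 w = 0 := by simp [Bf]
lemma Bf_zero_right (ν : ℕ) (v : Fin (2*ν) → ZMod 2) : Bf ν v 0 = 0 := by simp [Bf]

lemma Bf_add_right (ν : ℕ) (v w w' : Fin (2*ν) → ZMod 2) :
    Bf ν v (w + w') = Bf ν v w + Bf ν v w' := by
  simp [Bf, Matrix.mulVec_add]

lemma Bf_nondeg (ν : ℕ) (v : Fin (2*ν) → ZMod 2) (h : ∀ w, Bf ν w v = 0) : v = 0 := by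
  funext j
  have := h (Pi.single (pr ν j) 1)
  rw [Bf] at this
  simp [single_dotProduct, sK2_mulVec, pr_pr] at this
  simpa using this

lemma zmod2_units (a : (ZMod 2)ˣ) : a = 1 := by revert a; decide

lemma rep_mk_f2 {n : ℕ} (v : Fin n → ZMod 2) (hv : v ≠ 0) :
    (Projectivization.mk (ZMod 2) v hv).rep = v := by
  obtain ⟨a, ha⟩ := Projectivization.exists_smul_eq_mk_rep (ZMod 2) v hv
  rw [zmod2_units a, one_smul] at ha
  exact ha.symm

lemma zmod2_cases (a : ZMod 2) : a = 0 ∨ a = 1 := by revert a; decide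

lemma zmod2_eq_of_ne_iff {a b : ZMod 2} (h : (a ≠ 0) ↔ (b ≠ 0)) : a = b := by
  revert h; revert a b; decide

lemma mk_eq_mk_of_eq {K V : Type*} [DivisionRing K] [AddCommGroup V] [Module K V]
    {v w : V} (hv : v ≠ 0) (hw : w ≠ 0) (h : v = w) :
    Projectivization.mk K v hv = Projectivization.mk K w hw := by
  subst h; rfl

lemma mk_rep' {K V : Type*} [DivisionRing K] [AddCommGroup V] [Module K V]
    (x : Projectivization K V) (h : x.rep ≠ 0) :
    Projectivization.mk K x.rep h = x :=
  Projectivization.mk_rep x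

/-- Adjacency in the symplectic graph over `F₂` is exactly non-vanishing of the form. -/
lemma adj_iff (ν : ℕ) (x y : Projectivization (ZMod 2) (Fin (2*ν) → ZMod 2)) :
    (SpG (ZMod 2) ν).Adj x y ↔ Bf ν x.rep y.rep ≠ 0 := by
  rw [SpG, SimpleGraph.fromRel_adj]
  constructor
  · rintro ⟨hne, h | h⟩
    · exact h
    · rw [Bf_symm]; exact h
  · intro h
    refine ⟨fun he => h ?_, Or.inl h⟩
    subst he; exact Bf_self ν _

lemma Bf_vecMul (ν : ℕ) (A : Matrix (Fin (2*ν)) (Fin (2*ν)) (ZMod 2))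
    (hA : A * sK (ZMod 2) ν * Aᵀ = sK (ZMod 2) ν) (v w : Fin (2*ν) → ZMod 2) :
    Bf ν (v ᵥ* A) (w ᵥ* A) = Bf ν v w := by
  simp only [Bf]
  rw [← Matrix.mulVec_transpose A w, Matrix.mulVec_mulVec, Matrix.dotProduct_mulVec,
    Matrix.dotProduct_mulVec, Matrix.vecMul_vecMul, ← Matrix.mul_assoc, hA]

section Perm

variable (ν : ℕ)

lemma vecMul_ne_zero (T : (Matrix (Fin (2*ν)) (Fin (2*ν)) (ZMod 2))ˣ)
    {v : Fin (2*ν) → ZMod 2} (hv : v ≠ 0) : v ᵥ* (T : Matrix (Fin (2*ν)) (Fin (2*ν)) (ZMod 2)) ≠ 0 := by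
  intro h
  apply hv
  have h2 : v ᵥ* ((T : Matrix (Fin (2*ν)) (Fin (2*ν)) (ZMod 2)) * ((T⁻¹ : _ˣ) : Matrix _ _ _)) = 0 := by
    rw [← Matrix.vecMul_vecMul, h, Matrix.zero_vecMul]
  rwa [← Units.val_mul, mul_inv_cancel, Units.val_one, Matrix.vecMul_one] at h2

/-- The action of an invertible matrix on the projective space, `[α] ↦ [αT]`. -/
noncomputable def toFun (T : (Matrix (Fin (2*ν)) (Fin (2*ν)) (ZMod 2))ˣ) :
    Projectivization (ZMod 2) (Fin (2*ν) → ZMod 2) →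
      Projectivization (ZMod 2) (Fin (2*ν) → ZMod 2) :=
  fun x => Projectivization.mk (ZMod 2) (x.rep ᵥ* (T : Matrix (Fin (2*ν)) (Fin (2*ν)) (ZMod 2)))
    (vecMul_ne_zero ν T x.rep_nonzero)

lemma toFun_comp (T S : (Matrix (Fin (2*ν)) (Fin (2*ν)) (ZMod 2))ˣ)
    (x : Projectivization (ZMod 2) (Fin (2*ν) → ZMod 2)) :
    toFun ν S (toFun ν T x) = toFun ν (T*S) x := by
  simp only [toFun]
  apply mk_eq_mk_of_eq
  rw [rep_mk_f2, Matrix.vecMul_vecMul, Units.val_mul]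

lemma toFun_one (x : Projectivization (ZMod 2) (Fin (2*ν) → ZMod 2)) :
    toFun ν 1 x = x := by
  simp only [toFun, Units.val_one, Matrix.vecMul_one]
  exact mk_rep' x _

/-- The permutation of the projective space induced by an invertible matrix. -/
noncomputable def toPerm (T : (Matrix (Fin (2*ν)) (Fin (2*ν)) (ZMod 2))ˣ) :
    Equiv.Perm (Projectivization (ZMod 2) (Fin (2*ν) → ZMod 2)) where
  toFun := toFun ν T
  invFun := toFun ν T⁻¹
  left_inv x := by rw [toFun_comp, mul_inv_cancel, toFun_one]
  right_inv x := by rw [toFun_comp, inv_mul_cancel, toFun_one]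

lemma toPerm_apply (T : (Matrix (Fin (2*ν)) (Fin (2*ν)) (ZMod 2))ˣ)
    (x : Projectivization (ZMod 2) (Fin (2*ν) → ZMod 2)) :
    toPerm ν T x = Projectivization.mk (ZMod 2) (x.rep ᵥ* (T : Matrix (Fin (2*ν)) (Fin (2*ν)) (ZMod 2)))
      (vecMul_ne_zero ν T x.rep_nonzero) := rfl

lemma toPerm_mem (T : (Matrix (Fin (2*ν)) (Fin (2*ν)) (ZMod 2))ˣ)
    (hT : (T : Matrix (Fin (2*ν)) (Fin (2*ν)) (ZMod 2)) * sK (ZMod 2) ν * (T : Matrix (Fin (2*ν)) (Fin (2*ν)) (ZMod 2))ᵀ = sK (ZMod 2) ν) :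
    toPerm ν T ∈ autGroup (SpG (ZMod 2) ν) := by
  intro x y
  rw [adj_iff, adj_iff, toPerm_apply, toPerm_apply, rep_mk_f2, rep_mk_f2,
    Bf_vecMul ν _ hT]

lemma toPerm_eq_one {T : (Matrix (Fin (2*ν)) (Fin (2*ν)) (ZMod 2))ˣ}
    (h : toPerm ν T = 1) : T = 1 := by
  have key : ∀ v : Fin (2*ν) → ZMod 2, v ᵥ* (T : Matrix (Fin (2*ν)) (Fin (2*ν)) (ZMod 2)) = v := by
    intro v
    by_cases hv : v = 0
    · subst hv; simp [Matrix.zero_vecMul]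
    · have h2 := congrArg (fun σ : Equiv.Perm (Projectivization (ZMod 2) (Fin (2*ν) → ZMod 2)) =>
        σ (Projectivization.mk (ZMod 2) v hv)) h
      simp only [Equiv.Perm.one_apply, toPerm_apply] at h2
      have h3 := congrArg Projectivization.rep h2
      rwa [rep_mk_f2, rep_mk_f2] at h3
  apply Units.ext
  rw [Units.val_one]
  ext i j
  have := congrFun (key (Pi.single i 1)) j
  rw [Matrix.single_one_vecMul, Matrix.row] at this
  rw [this, Matrix.one_apply, Pi.single_apply]
  exact if_congr eq_comm rfl rfl

end Perm

end Aux
section Hom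

open Projectivization MulOpposite

variable (ν : ℕ)

/-- The map `T ↦ σ_T` as a monoid hom into the opposite of the automorphism group. -/
noncomputable def phi0 : SpMat (ZMod 2) ν →* (autGroup (SpG (ZMod 2) ν))ᵐᵒᵖ where
  toFun T := op ⟨toPerm ν T.val, toPerm_mem ν T.val T.2⟩
  map_one' := by
    refine congrArg op (Subtype.ext (Equiv.ext fun x => ?_))
    show toFun ν ((1 : SpMat (ZMod 2) ν) : (Matrix (Fin (2*ν)) (Fin (2*ν)) (ZMod 2))ˣ) x = x
    rw [OneMemClass.coe_one]
    exact toFun_one ν x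
  map_mul' a b := by
    rw [← op_mul]
    refine congrArg op (Subtype.ext (Equiv.ext fun x => ?_))
    show toFun ν ((a * b : SpMat (ZMod 2) ν) : (Matrix (Fin (2*ν)) (Fin (2*ν)) (ZMod 2))ˣ) x
      = toFun ν b.val (toFun ν a.val x)
    rw [toFun_comp]
    rfl
  
lemma phi0_inj : Function.Injective (phi0 ν) := by
  intro T S h
  have h2 : toPerm ν T.val = toPerm ν S.val := by
    have := congrArg (fun g => ((unop g : autGroup (SpG (ZMod 2) ν)) :
      Equiv.Perm (Projectivization (ZMod 2) (Fin (2*ν) → ZMod 2)))) h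
    simpa [phi0] using this
  have h3 : toPerm ν (T.val * S.val⁻¹) = 1 := by
    ext x
    show toFun ν (T.val * S.val⁻¹) x = x
    rw [← toFun_comp]
    have hx : toFun ν T.val x = toFun ν S.val x := congrArg (fun σ : Equiv.Perm
      (Projectivization (ZMod 2) (Fin (2*ν) → ZMod 2)) => σ x) h2
    rw [hx, toFun_comp, mul_inv_cancel, toFun_one]
  have h4 : T.val * S.val⁻¹ = 1 := toPerm_eq_one ν h3
  have h5 : T.val = S.val := by
    have := congrArg (· * S.val) h4
    simpa [mul_assoc] using this
  exact Subtype.ext h5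

end Hom
section Surj

open Projectivization MulOpposite

variable (ν : ℕ)

/-- The vector-level map induced by a permutation of the projective space
(sending `0` to `0` and a nonzero `v` to the representative of `σ [v]`). -/
noncomputable def ff (σ : Equiv.Perm (Projectivization (ZMod 2) (Fin (2*ν) → ZMod 2)))
    (v : Fin (2*ν) → ZMod 2) : Fin (2*ν) → ZMod 2 :=
  if h : v = 0 then 0 else (σ (Projectivization.mk (ZMod 2) v h)).rep

variable (σ : Equiv.Perm (Projectivization (ZMod 2) (Fin (2*ν) → ZMod 2)))

lemma ff_zero : ff ν σ 0 = 0 := dif_pos rfl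

lemma ff_apply {v : Fin (2*ν) → ZMod 2} (hv : v ≠ 0) :
    ff ν σ v = (σ (Projectivization.mk (ZMod 2) v hv)).rep := dif_neg hv

lemma ff_leftinv (v : Fin (2*ν) → ZMod 2) : ff ν σ⁻¹ (ff ν σ v) = v := by
  by_cases hv : v = 0
  · subst hv; rw [ff_zero, ff_zero]
  · rw [ff_apply ν σ hv, ff_apply ν σ⁻¹ (Projectivization.rep_nonzero _), mk_rep',
      ← Equiv.Perm.mul_apply, inv_mul_cancel, Equiv.Perm.one_apply, rep_mk_f2]

lemma ff_Bf (hσ : σ ∈ autGroup (SpG (ZMod 2) ν)) (v w : Fin (2*ν) → ZMod 2) :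
    Bf ν (ff ν σ v) (ff ν σ w) = Bf ν v w := by
  by_cases hv : v = 0
  · subst hv; rw [ff_zero, Bf_zero_left, Bf_zero_left]
  by_cases hw : w = 0
  · subst hw; rw [ff_zero, Bf_zero_right, Bf_zero_right]
  by_cases hvw : v = w
  · subst hvw; rw [Bf_self, Bf_self]
  apply zmod2_eq_of_ne_iff
  have h1 : Bf ν (ff ν σ v) (ff ν σ w) ≠ 0 ↔ (SpG (ZMod 2) ν).Adj
      (σ (Projectivization.mk (ZMod 2) v hv)) (σ (Projectivization.mk (ZMod 2) w hw)) := by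
    rw [adj_iff, ff_apply ν σ hv, ff_apply ν σ hw]
  rw [h1, hσ, adj_iff, rep_mk_f2, rep_mk_f2]

lemma ff_add (hσ : σ ∈ autGroup (SpG (ZMod 2) ν)) (v w : Fin (2*ν) → ZMod 2) :
    ff ν σ (v + w) = ff ν σ v + ff ν σ w := by
  have key : ∀ δ, Bf ν δ (ff ν σ (v + w) + (ff ν σ v + ff ν σ w)) = 0 := by
    intro δ
    by_cases hδ : δ = 0
    · subst hδ; exact Bf_zero_left ν _
    · have hδ' : ff ν σ (ff ν σ⁻¹ δ) = δ := by
        have := ff_leftinv ν σ⁻¹ δ; rwa [inv_inv] at this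
      rw [← hδ', Bf_add_right, Bf_add_right, ff_Bf ν σ hσ, ff_Bf ν σ hσ, ff_Bf ν σ hσ,
        Bf_add_right]
      exact CharTwo.add_self_eq_zero _
  have h0 := Bf_nondeg ν _ key
  have h1 := eq_neg_of_add_eq_zero_left h0
  rw [h1]
  funext i
  simp [CharTwo.neg_eq]

/-- The matrix whose rows are the images of the standard basis vectors under `ff`. -/
noncomputable def SS : Matrix (Fin (2*ν)) (Fin (2*ν)) (ZMod 2) :=
  Matrix.of fun i j => ff ν σ (Pi.single i 1) j

lemma vecMul_SS (hσ : σ ∈ autGroup (SpG (ZMod 2) ν)) (v : Fin (2*ν) → ZMod 2) :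
    v ᵥ* SS ν σ = ff ν σ v := by
  let fA : (Fin (2*ν) → ZMod 2) →+ (Fin (2*ν) → ZMod 2) :=
    AddMonoidHom.mk' (ff ν σ) (ff_add ν σ hσ)
  have hfA : ∀ u, fA u = ff ν σ u := fun _ => rfl
  funext j
  have h1 : ff ν σ v = ∑ i, ff ν σ (Pi.single i (v i)) := by
    conv_lhs => rw [← hfA, ← Finset.univ_sum_single v]
    rw [map_sum]
    simp [hfA]
  calc (v ᵥ* SS ν σ) j = ∑ i, v i * SS ν σ i j := by
        simp [Matrix.vecMul, dotProduct]
    _ = ∑ i, ff ν σ (Pi.single i (v i)) j := by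
        refine Finset.sum_congr rfl fun i _ => ?_
        rcases zmod2_cases (v i) with h | h
        · rw [h]; simp [ff_zero]
        · rw [h]; simp [SS]
    _ = (∑ i, ff ν σ (Pi.single i (v i))) j := by rw [Finset.sum_apply]
    _ = ff ν σ v j := by rw [← h1]

lemma eq_one_of_vecMul {M : Matrix (Fin (2*ν)) (Fin (2*ν)) (ZMod 2)}
    (h : ∀ v, v ᵥ* M = v) : M = 1 := by
  ext i j
  have := congrFun (h (Pi.single i 1)) j
  rw [Matrix.single_one_vecMul, Matrix.row] at this
  rw [this, Matrix.one_apply, Pi.single_apply]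
  exact if_congr eq_comm rfl rfl

lemma SS_mul_inv (hσ : σ ∈ autGroup (SpG (ZMod 2) ν)) : SS ν σ * SS ν σ⁻¹ = 1 := by
  apply eq_one_of_vecMul
  intro v
  rw [← Matrix.vecMul_vecMul, vecMul_SS ν σ hσ, vecMul_SS ν σ⁻¹ (inv_mem hσ),
    ff_leftinv]

/-- The invertible matrix attached to a graph automorphism. -/
noncomputable def UU (hσ : σ ∈ autGroup (SpG (ZMod 2) ν)) :
    (Matrix (Fin (2*ν)) (Fin (2*ν)) (ZMod 2))ˣ :=
  ⟨SS ν σ, SS ν σ⁻¹, SS_mul_inv ν σ hσ, by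
    have := SS_mul_inv ν σ⁻¹ (inv_mem hσ); rwa [inv_inv] at this⟩

lemma conj_entry (A : Matrix (Fin (2*ν)) (Fin (2*ν)) (ZMod 2)) (i j : Fin (2*ν)) :
    (A * sK (ZMod 2) ν * Aᵀ) i j = Bf ν (A i) (A j) := by
  rw [Matrix.mul_assoc]
  simp [Matrix.mul_apply, Bf, dotProduct, Matrix.mulVec, Matrix.transpose_apply,
    Finset.mul_sum]

lemma SS_symp (hσ : σ ∈ autGroup (SpG (ZMod 2) ν)) :
    SS ν σ * sK (ZMod 2) ν * (SS ν σ)ᵀ = sK (ZMod 2) ν := by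
  ext i j
  rw [conj_entry]
  have hrow : ∀ i, SS ν σ i = ff ν σ (Pi.single i 1) := fun _ => rfl
  rw [hrow, hrow, ff_Bf ν σ hσ]
  rw [Bf, single_dotProduct, one_mul, sK2_mulVec, sK2_apply, Pi.single_apply]
  exact if_congr eq_comm rfl rfl

lemma phi0_surj : Function.Surjective (phi0 ν) := by
  intro g
  have hσ : ((unop g : autGroup (SpG (ZMod 2) ν)) :
      Equiv.Perm (Projectivization (ZMod 2) (Fin (2*ν) → ZMod 2))) ∈
      autGroup (SpG (ZMod 2) ν) := (unop g).2
  set σ := ((unop g : autGroup (SpG (ZMod 2) ν)) :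
      Equiv.Perm (Projectivization (ZMod 2) (Fin (2*ν) → ZMod 2)))
  refine ⟨⟨UU ν σ hσ, ?_⟩, ?_⟩
  · show (UU ν σ hσ : Matrix _ _ _) * sK (ZMod 2) ν * (UU ν σ hσ : Matrix _ _ _)ᵀ
      = sK (ZMod 2) ν
    exact SS_symp ν σ hσ
  · refine MulOpposite.unop_injective (Subtype.ext (Equiv.ext fun x => ?_))
    show toFun ν (UU ν σ hσ) x = σ x
    have hvec : x.rep ᵥ* (UU ν σ hσ : Matrix _ _ _) = (σ x).rep := by
      show x.rep ᵥ* SS ν σ = (σ x).rep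
      rw [vecMul_SS ν σ hσ, ff_apply ν σ x.rep_nonzero, mk_rep']
    calc toFun ν (UU ν σ hσ) x
        = Projectivization.mk (ZMod 2) ((σ x).rep) (Projectivization.rep_nonzero _) :=
          mk_eq_mk_of_eq _ _ hvec
      _ = σ x := mk_rep' _ _

end Surj

/-- The automorphism group of `Sp(2ν,2)` is isomorphic to the symplectic group
`Sp_{2ν}(F_2)` via the map sending `T` to the automorphism `[α] ↦ [αT]`.
(Over `F_2` a vertex, i.e. a one-dimensional subspace, is determined by its unique
nonzero vector `rep`; the multiplicative opposite appears because the paper composes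
maps in diagrammatic order: `σ_{T₁T₂} = σ_{T₂} ∘ σ_{T₁}`.) -/
theorem aut_SpG_two_eq_symplectic (ν : ℕ) (hν : 1 ≤ ν) :
    ∃ φ : SpMat (ZMod 2) ν ≃* (autGroup (SpG (ZMod 2) ν))ᵐᵒᵖ,
      ∀ (T : SpMat (ZMod 2) ν) (x : Projectivization (ZMod 2) (Fin (2 * ν) → ZMod 2)),
        ((((φ T).unop : Equiv.Perm (Projectivization (ZMod 2) (Fin (2 * ν) → ZMod 2))) x).rep)
          = x.rep ᵥ* ((T : (Matrix (Fin (2 * ν)) (Fin (2 * ν)) (ZMod 2))ˣ)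
              : Matrix (Fin (2 * ν)) (Fin (2 * ν)) (ZMod 2)) := by
  refine ⟨MulEquiv.ofBijective (phi0 ν) ⟨phi0_inj ν, phi0_surj ν⟩, fun T x => ?_⟩
  show (toFun ν (T : (Matrix (Fin (2*ν)) (Fin (2*ν)) (ZMod 2))ˣ) x).rep = _
  exact rep_mk_f2 _ _
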